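/- There exists a constant C > 0 such that for all ℓ ∈ ℤ² with ℓ₁ < 0 and |ℓ| ≥ 2, the sum ∑_{k ∈ U_Γ} (1+|k|)^{-1}·(1+|ℓ-k|)^{-2} ≤ C·|ℓ|^{-2}·log|ℓ|, where U_Γ = {k ∈ ℤ² : |k₂| ≤ r, k₁ ≥ 0} is a half-strip of fixed width r ≥ 1. -/

import Mathlib

/-- Euclidean norm of a point in ℤ². -/
noncomputable def nrm (ℓ : ℤ × ℤ) : ℝ := Real.sqrt ((ℓ.1 : ℝ) ^ 2 + (ℓ.2 : ℝ) ^ 2)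

lemma nrm_nonneg (k : ℤ × ℤ) : 0 ≤ nrm k := Real.sqrt_nonneg _

lemma abs_fst_le_nrm (k : ℤ × ℤ) : |(k.1 : ℝ)| ≤ nrm k := by
  rw [nrm, ← Real.sqrt_sq_eq_abs]
  exact Real.sqrt_le_sqrt (by nlinarith [sq_nonneg ((k.2 : ℝ))])

lemma abs_snd_le_nrm (k : ℤ × ℤ) : |(k.2 : ℝ)| ≤ nrm k := by
  rw [nrm, ← Real.sqrt_sq_eq_abs]
  exact Real.sqrt_le_sqrt (by nlinarith [sq_nonneg ((k.1 : ℝ))])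

lemma nrm_le_abs_add (k : ℤ × ℤ) : nrm k ≤ |(k.1 : ℝ)| + |(k.2 : ℝ)| := by
  rw [nrm]
  have h : ((k.1 : ℝ)) ^ 2 + (k.2 : ℝ) ^ 2 ≤ (|(k.1 : ℝ)| + |(k.2 : ℝ)|) ^ 2 := by
    nlinarith [abs_nonneg ((k.1 : ℝ)), abs_nonneg ((k.2 : ℝ)), sq_abs ((k.1:ℝ)), sq_abs ((k.2:ℝ))]
  calc Real.sqrt ((k.1:ℝ)^2 + (k.2:ℝ)^2) ≤ Real.sqrt ((|(k.1:ℝ)| + |(k.2:ℝ)|)^2) :=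
        Real.sqrt_le_sqrt h
    _ = |(k.1:ℝ)| + |(k.2:ℝ)| := Real.sqrt_sq (by positivity)

lemma tail_inv_sq (N : ℕ) (hN : 1 ≤ N) :
    Summable (fun i : ℕ => (((N : ℝ) + i + 1) ^ 2)⁻¹) ∧
    ∑' i : ℕ, (((N : ℝ) + i + 1) ^ 2)⁻¹ ≤ (N : ℝ)⁻¹ := by
  have hNpos : (0:ℝ) < N := by exact_mod_cast hN
  set f : ℕ → ℝ := fun i => ((N : ℝ) + i)⁻¹ with hf
  have hfpos : ∀ i : ℕ, (0:ℝ) < (N:ℝ) + i := fun i => by positivity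
  have hdiff : ∀ i : ℕ, (((N : ℝ) + i + 1) ^ 2)⁻¹ ≤ f i - f (i+1) := by
    intro i
    have h1 : (0:ℝ) < (N:ℝ) + i := hfpos i
    have h2 : (0:ℝ) < (N:ℝ) + i + 1 := by linarith
    have heq : f i - f (i+1) = (((N:ℝ) + i) * ((N:ℝ) + i + 1))⁻¹ := by
      simp only [hf]
      push_cast
      have : ((N:ℝ)+i+1) = (N:ℝ)+(i+1) := by ring
      rw [← this]
      field_simp
      ring
    rw [heq]
    exact inv_anti₀ (by positivity) (by nlinarith)
  have htdto : Filter.Tendsto f Filter.atTop (nhds 0) := by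
    apply Filter.Tendsto.inv_tendsto_atTop
    exact Filter.tendsto_atTop_add_const_left _ _ tendsto_natCast_atTop_atTop
  have hsum : HasSum (fun i => f i - f (i+1)) ((N:ℝ)⁻¹) := by
    rw [hasSum_iff_tendsto_nat_of_nonneg]
    · have hps : ∀ m : ℕ, ∑ i ∈ Finset.range m, (f i - f (i+1)) = f 0 - f m :=
        fun m => Finset.sum_range_sub' f m
      have : Filter.Tendsto (fun m => f 0 - f m) Filter.atTop (nhds ((N:ℝ)⁻¹)) := by
        have h0 : f 0 = (N:ℝ)⁻¹ := by simp [hf]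
        rw [← h0]
        simpa using tendsto_const_nhds.sub htdto
      exact this.congr (fun m => (hps m).symm)
    · intro i
      have := hdiff i
      have : (0:ℝ) ≤ (((N : ℝ) + i + 1) ^ 2)⁻¹ := by positivity
      linarith [hdiff i]
  have hsq : Summable (fun i : ℕ => (((N : ℝ) + i + 1) ^ 2)⁻¹) :=
    Summable.of_nonneg_of_le (fun i => by positivity) hdiff hsum.summable
  refine ⟨hsq, ?_⟩
  calc ∑' i : ℕ, (((N : ℝ) + i + 1) ^ 2)⁻¹ ≤ ∑' i, (f i - f (i+1)) :=
        Summable.tsum_le_tsum hdiff hsq hsum.summable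
    _ = (N:ℝ)⁻¹ := hsum.tsum_eq

lemma aux_sum (L : ℝ) (hL : 2 ≤ L) :
    Summable (fun n : ℕ => (1 + (n:ℝ))⁻¹ * ((L + n) ^ 2)⁻¹) ∧
    ∑' n : ℕ, (1 + (n:ℝ))⁻¹ * ((L + n) ^ 2)⁻¹ ≤ 6 * (L ^ 2)⁻¹ * Real.log L := by
  have hL0 : (0:ℝ) < L := by linarith
  set G : ℕ → ℝ := fun n => (1 + (n:ℝ))⁻¹ * ((L + n) ^ 2)⁻¹ with hGdef
  have hGnonneg : ∀ n, 0 ≤ G n := fun n => by positivity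
  -- summability
  have hbase : Summable (fun n : ℕ => ((1 + (n:ℝ)) ^ 2)⁻¹) := by
    have h1 : Summable (fun n : ℕ => (((n:ℝ)) ^ 2)⁻¹) :=
      Real.summable_nat_pow_inv.mpr one_lt_two
    have h2 := (summable_nat_add_iff 1).mpr h1
    apply h2.congr
    intro n
    push_cast
    ring_nf
  have hG : Summable G := by
    apply Summable.of_nonneg_of_le hGnonneg _ hbase
    intro n
    have hn1 : (0:ℝ) < 1 + n := by positivity
    have h2 : ((L + n) ^ 2)⁻¹ ≤ (1 + (n:ℝ))⁻¹ := by
      apply inv_anti₀ hn1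
      nlinarith [Nat.cast_nonneg (α := ℝ) n]
    calc G n ≤ (1 + (n:ℝ))⁻¹ * (1 + (n:ℝ))⁻¹ :=
          mul_le_mul_of_nonneg_left h2 (by positivity)
      _ = ((1 + (n:ℝ)) ^ 2)⁻¹ := by rw [← mul_inv, sq]
  refine ⟨hG, ?_⟩
  have hlogL : (1:ℝ) ≤ 2 * Real.log L := by
    have h2 : Real.log 2 ≤ Real.log L := Real.log_le_log two_pos hL
    have := Real.log_two_gt_d9
    linarith
  have hlogpos : (0:ℝ) < Real.log L := by linarith
  set N : ℕ := ⌈L⌉₊ with hNdef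
  have hNL : L ≤ (N:ℝ) := Nat.le_ceil L
  have hN1 : 1 ≤ N := by
    have h1 : (1:ℝ) ≤ (N:ℝ) := by linarith
    exact_mod_cast h1
  have hNL2 : (N:ℝ) ≤ L ^ 2 := by
    have := Nat.ceil_lt_add_one (le_of_lt hL0)
    nlinarith
  -- split
  rw [← Summable.sum_add_tsum_nat_add N hG]
  -- head bound
  have hhead : ∑ i ∈ Finset.range N, G i ≤ (L ^ 2)⁻¹ * (4 * Real.log L) := by
    have hstep : ∀ i ∈ Finset.range N, G i ≤ (L ^ 2)⁻¹ * (1 + (i:ℝ))⁻¹ := by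
      intro i _
      have h2 : ((L + i) ^ 2)⁻¹ ≤ (L ^ 2)⁻¹ := by
        apply inv_anti₀ (by positivity)
        nlinarith [Nat.cast_nonneg (α := ℝ) i]
      calc G i ≤ (1 + (i:ℝ))⁻¹ * (L ^ 2)⁻¹ :=
            mul_le_mul_of_nonneg_left h2 (by positivity)
        _ = (L ^ 2)⁻¹ * (1 + (i:ℝ))⁻¹ := by ring
    calc ∑ i ∈ Finset.range N, G i ≤ ∑ i ∈ Finset.range N, (L ^ 2)⁻¹ * (1 + (i:ℝ))⁻¹ :=
          Finset.sum_le_sum hstep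
      _ = (L ^ 2)⁻¹ * ∑ i ∈ Finset.range N, (1 + (i:ℝ))⁻¹ := by rw [Finset.mul_sum]
      _ ≤ (L ^ 2)⁻¹ * (4 * Real.log L) := by
          apply mul_le_mul_of_nonneg_left _ (by positivity)
          have hharm : ∑ i ∈ Finset.range N, (1 + (i:ℝ))⁻¹ = ((harmonic N : ℚ) : ℝ) := by
            rw [harmonic]
            push_cast
            apply Finset.sum_congr rfl
            intro i _
            ring_nf
          rw [hharm]
          have h1 : ((harmonic N : ℚ) : ℝ) ≤ 1 + Real.log N := harmonic_le_one_add_log N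
          have h2 : Real.log N ≤ Real.log (L ^ 2) := by
            apply Real.log_le_log (by positivity) hNL2
          rw [Real.log_pow] at h2
          push_cast at h2
          linarith
  -- tail bound
  have htail0 := tail_inv_sq N hN1
  have htailpt : ∀ i : ℕ, G (i + N) ≤ L⁻¹ * (((N:ℝ) + i + 1) ^ 2)⁻¹ := by
    intro i
    have hc : ((i + N : ℕ) : ℝ) = (i:ℝ) + N := by push_cast; ring
    have hpos1 : (0:ℝ) < 1 + ((i:ℝ) + N) := by positivity
    have key : ((L + ((i:ℝ) + N)) ^ 2)⁻¹ ≤ (L * (1 + ((i:ℝ) + N)))⁻¹ := by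
      apply inv_anti₀ (by positivity)
      nlinarith [Nat.cast_nonneg (α := ℝ) i, Nat.cast_nonneg (α := ℝ) N]
    have : G (i + N) = (1 + ((i:ℝ) + N))⁻¹ * ((L + ((i:ℝ) + N)) ^ 2)⁻¹ := by
      simp only [hGdef, hc]
    rw [this]
    calc (1 + ((i:ℝ) + N))⁻¹ * ((L + ((i:ℝ) + N)) ^ 2)⁻¹
        ≤ (1 + ((i:ℝ) + N))⁻¹ * (L * (1 + ((i:ℝ) + N)))⁻¹ :=
          mul_le_mul_of_nonneg_left key (by positivity)
      _ = L⁻¹ * (((N:ℝ) + i + 1) ^ 2)⁻¹ := by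
          rw [← mul_inv, ← mul_inv]
          congr 1
          ring
  have htailsummable : Summable (fun i : ℕ => G (i + N)) := (summable_nat_add_iff N).mpr hG
  have htail : ∑' i : ℕ, G (i + N) ≤ (L ^ 2)⁻¹ * (2 * Real.log L) := by
    calc ∑' i : ℕ, G (i + N) ≤ ∑' i : ℕ, L⁻¹ * (((N:ℝ) + i + 1) ^ 2)⁻¹ :=
          Summable.tsum_le_tsum htailpt htailsummable (htail0.1.mul_left _)
      _ = L⁻¹ * ∑' i : ℕ, (((N:ℝ) + i + 1) ^ 2)⁻¹ := tsum_mul_left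
      _ ≤ L⁻¹ * (N:ℝ)⁻¹ := mul_le_mul_of_nonneg_left htail0.2 (by positivity)
      _ ≤ L⁻¹ * L⁻¹ := by
          apply mul_le_mul_of_nonneg_left (inv_anti₀ hL0 hNL) (by positivity)
      _ = (L ^ 2)⁻¹ := by rw [← mul_inv, sq]
      _ ≤ (L ^ 2)⁻¹ * (2 * Real.log L) := by
          nlinarith [inv_pos.mpr (pow_pos hL0 2)]
  calc ∑ i ∈ Finset.range N, G i + ∑' i : ℕ, G (i + N)
      ≤ (L ^ 2)⁻¹ * (4 * Real.log L) + (L ^ 2)⁻¹ * (2 * Real.log L) := add_le_add hhead htail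
    _ = 6 * (L ^ 2)⁻¹ * Real.log L := by ring

lemma geom_est (r : ℤ) (hr : 1 ≤ r) (ℓ k : ℤ × ℤ) (hl : ℓ.1 < 0) (hk1 : 0 ≤ k.1)
    (hk2 : |k.2| ≤ r) : nrm ℓ + nrm k ≤ (2 + 2*(r:ℝ)) * (1 + nrm (ℓ - k)) := by
  have hr' : (1:ℝ) ≤ (r:ℝ) := by exact_mod_cast hr
  have ha : (ℓ.1:ℝ) < 0 := by exact_mod_cast hl
  have hc : (0:ℝ) ≤ (k.1:ℝ) := by exact_mod_cast hk1
  have hd : |(k.2:ℝ)| ≤ (r:ℝ) := by exact_mod_cast hk2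
  have h1 : |((ℓ - k).1 : ℝ)| ≤ nrm (ℓ - k) := abs_fst_le_nrm _
  have h2 : |((ℓ - k).2 : ℝ)| ≤ nrm (ℓ - k) := abs_snd_le_nrm _
  have e1 : ((ℓ - k).1 : ℝ) = (ℓ.1:ℝ) - (k.1:ℝ) := by
    rw [Prod.fst_sub]; push_cast; ring
  have e2 : ((ℓ - k).2 : ℝ) = (ℓ.2:ℝ) - (k.2:ℝ) := by
    rw [Prod.snd_sub]; push_cast; ring
  rw [e1] at h1; rw [e2] at h2
  have habs1 : |(ℓ.1:ℝ) - (k.1:ℝ)| = -((ℓ.1:ℝ) - (k.1:ℝ)) := abs_of_neg (by linarith)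
  have hb : |(ℓ.2:ℝ)| - |(k.2:ℝ)| ≤ |(ℓ.2:ℝ) - (k.2:ℝ)| := abs_sub_abs_le_abs_sub _ _
  have hEl : nrm ℓ ≤ |(ℓ.1:ℝ)| + |(ℓ.2:ℝ)| := nrm_le_abs_add ℓ
  have hEk : nrm k ≤ |(k.1:ℝ)| + |(k.2:ℝ)| := nrm_le_abs_add k
  have habsl1 : |(ℓ.1:ℝ)| = -(ℓ.1:ℝ) := abs_of_neg ha
  have habsk1 : |(k.1:ℝ)| = (k.1:ℝ) := abs_of_nonneg hc
  nlinarith [nrm_nonneg (ℓ - k), mul_nonneg (by linarith : (0:ℝ) ≤ (r:ℝ)) (nrm_nonneg (ℓ - k))]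

/-- For a half-strip U_Γ = {k ∈ ℤ² : |k₂| ≤ r, k₁ ≥ 0} of fixed width r ≥ 1, there is
C > 0 such that for all ℓ ∈ ℤ² with ℓ₁ < 0 and |ℓ| ≥ 2,
∑_{k ∈ U_Γ} (1+|k|)⁻¹(1+|ℓ-k|)⁻² ≤ C·|ℓ|⁻²·log|ℓ|. -/
theorem half_strip_sum_bound (r : ℤ) (hr : 1 ≤ r) :
    ∃ C : ℝ, 0 < C ∧ ∀ ℓ : ℤ × ℤ, ℓ.1 < 0 → 2 ≤ nrm ℓ →
      (∑' k : {k : ℤ × ℤ // |k.2| ≤ r ∧ 0 ≤ k.1},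
          (1 + nrm k.1)⁻¹ * ((1 + nrm (ℓ - k.1)) ^ 2)⁻¹)
        ≤ C * ((nrm ℓ) ^ 2)⁻¹ * Real.log (nrm ℓ) := by
  have hr' : (1:ℝ) ≤ (r:ℝ) := by exact_mod_cast hr
  set M : ℝ := 2 + 2*(r:ℝ) with hM
  have hM0 : (0:ℝ) < M := by linarith
  refine ⟨(2*(r:ℝ)+1) * M^2 * 6, by positivity, ?_⟩
  intro ℓ hl hL
  set L := nrm ℓ with hLdef
  have hL0 : (0:ℝ) < L := by linarith
  have hlogpos : (0:ℝ) < Real.log L := by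
    have h2 : Real.log 2 ≤ Real.log L := Real.log_le_log two_pos hL
    have := Real.log_two_gt_d9
    linarith
  obtain ⟨hGsum, hGle⟩ := aux_sum L hL
  set G : ℕ → ℝ := fun n => (1 + (n:ℝ))⁻¹ * ((L + n) ^ 2)⁻¹ with hGdef
  set J := Finset.Icc (-r) r with hJ
  have hmem : ∀ j : ℤ, j ∈ J ↔ |j| ≤ r := by
    intro j; rw [hJ, Finset.mem_Icc, abs_le]
  set S := {k : ℤ × ℤ // |k.2| ≤ r ∧ 0 ≤ k.1} with hS
  let e : (J × ℕ) ≃ S :=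
    { toFun := fun p => ⟨((p.2 : ℤ), (p.1 : ℤ)), ⟨(hmem _).mp p.1.2, Int.natCast_nonneg _⟩⟩
      invFun := fun s => (⟨s.1.2, (hmem _).mpr s.2.1⟩, s.1.1.toNat)
      left_inv := fun p => by
        rcases p with ⟨j, n⟩
        simp
      right_inv := fun s => by
        rcases s with ⟨⟨k1, k2⟩, h⟩
        simp [Int.toNat_of_nonneg h.2] }
  set F : S → ℝ := fun k => (1 + nrm k.1)⁻¹ * ((1 + nrm (ℓ - k.1)) ^ 2)⁻¹ with hF
  have hFnonneg : ∀ k : S, 0 ≤ F k := by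
    intro k
    have := nrm_nonneg k.1
    have := nrm_nonneg (ℓ - k.1)
    apply mul_nonneg (inv_nonneg.mpr (by linarith)) (inv_nonneg.mpr (by positivity))
  set B : (J × ℕ) → ℝ := fun p => M^2 * G p.2 with hB
  have hBnonneg : ∀ p, 0 ≤ B p := by
    intro p
    apply mul_nonneg (by positivity)
    have : (0:ℝ) < L + p.2 := by positivity
    positivity
  have key : ∀ p : (J × ℕ), F (e p) ≤ B p := by
    rintro ⟨j, n⟩
    set k : ℤ × ℤ := ((n : ℤ), (j : ℤ)) with hk
    have hEp1 : ((e (j, n)) : S).1 = k := rfl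
    have hk1 : (0:ℤ) ≤ k.1 := Int.natCast_nonneg n
    have hk2 : |k.2| ≤ r := (hmem _).mp j.2
    have hnrmk : (n:ℝ) ≤ nrm k := by
      have := abs_fst_le_nrm k
      rw [hk] at this
      simpa using (le_trans (le_abs_self _) this)
    have hgeo : L + nrm k ≤ M * (1 + nrm (ℓ - k)) := by
      have h := geom_est r hr ℓ k hl hk1 hk2
      rw [← hM, ← hLdef] at h
      linarith
    have hLn : (0:ℝ) < L + (n:ℝ) := by positivity
    have hchain : L + (n:ℝ) ≤ M * (1 + nrm (ℓ - k)) := by linarith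
    have hsq : (L + (n:ℝ))^2 ≤ (M * (1 + nrm (ℓ - k)))^2 :=
      pow_le_pow_left₀ (le_of_lt hLn) hchain 2
    have hiv : ((1 + nrm (ℓ - k)) ^ 2)⁻¹ ≤ M^2 * ((L + (n:ℝ))^2)⁻¹ := by
      have hpos : (0:ℝ) < 1 + nrm (ℓ - k) := by
        have := nrm_nonneg (ℓ - k); linarith
      have heq : ((1 + nrm (ℓ - k)) ^ 2)⁻¹ = M^2 * ((M * (1 + nrm (ℓ - k)))^2)⁻¹ := by
        rw [mul_pow]
        field_simp
      rw [heq]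
      exact mul_le_mul_of_nonneg_left (inv_anti₀ (by positivity) hsq) (by positivity)
    have hinv1 : (1 + nrm k)⁻¹ ≤ (1 + (n:ℝ))⁻¹ := by
      apply inv_anti₀ (by positivity) (by linarith)
    have : F (e (j, n)) = (1 + nrm k)⁻¹ * ((1 + nrm (ℓ - k)) ^ 2)⁻¹ := by
      simp only [hF]
      rw [hEp1]
    rw [this]
    calc (1 + nrm k)⁻¹ * ((1 + nrm (ℓ - k)) ^ 2)⁻¹
        ≤ (1 + (n:ℝ))⁻¹ * (M^2 * ((L + (n:ℝ))^2)⁻¹) := by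
          apply mul_le_mul hinv1 hiv (by positivity) (by positivity)
      _ = B (j, n) := by rw [hB, hGdef]; ring
  have hBsum : Summable B := by
    rw [summable_prod_of_nonneg hBnonneg]
    constructor
    · intro x
      exact hGsum.mul_left _
    · exact Summable.of_finite
  have hFe : Summable (fun p : (J × ℕ) => F (e p)) :=
    Summable.of_nonneg_of_le (fun p => hFnonneg _) key hBsum
  have hFsum : Summable F := (Equiv.summable_iff e).mp hFe
  have hcard : ((J.card : ℕ) : ℝ) = 2*(r:ℝ)+1 := by
    have h0 : (0:ℤ) ≤ r + 1 - (-r) := by linarith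
    rw [hJ, Int.card_Icc]
    have h1 : ((r + 1 - -r).toNat : ℤ) = r + 1 - -r := Int.toNat_of_nonneg h0
    have h2 : (((r + 1 - -r).toNat : ℤ) : ℝ) = 2*(r:ℝ) + 1 := by rw [h1]; push_cast; ring
    exact_mod_cast h2
  calc (∑' k : S, F k) = ∑' p : (J × ℕ), F (e p) := (e.tsum_eq F).symm
    _ ≤ ∑' p : (J × ℕ), B p := Summable.tsum_le_tsum key hFe hBsum
    _ = ∑' j : J, ∑' n : ℕ, B (j, n) := Summable.tsum_prod hBsum
    _ = ∑' j : J, M^2 * ∑' n : ℕ, G n := by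
        apply tsum_congr
        intro j
        exact tsum_mul_left
    _ = (J.card : ℝ) * (M^2 * ∑' n : ℕ, G n) := by
        rw [tsum_fintype, Finset.sum_const, Finset.card_univ, Fintype.card_coe,
          nsmul_eq_mul]
    _ ≤ (2*(r:ℝ)+1) * (M^2 * (6 * (L^2)⁻¹ * Real.log L)) := by
        rw [hcard]
        apply mul_le_mul_of_nonneg_left _ (by positivity)
        apply mul_le_mul_of_nonneg_left hGle (by positivity)
    _ = (2*(r:ℝ)+1) * M^2 * 6 * (L^2)⁻¹ * Real.log L := by ring
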